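/- arXiv:2111.09159 — 3 statements merged into one kernel-verified Lean document; each statement's English description precedes it below -/
import Mathlib

section
/- (Theorem 1, Part 2.) In the AQE tabular setting, the expected post-update estimation bias is nondecreasing in the keep parameter K: for all integers 1 ≤ K ≤ N−1, E[Z_{K,N}] ≤ E[Z_{K+1,N}]. -/
open MeasureTheory ProbabilityTheory Finset

/-- The average of the `K` smallest values among `x 0, …, x (N-1)`:
sort the tuple nondecreasingly and average the first `K` entries. -/
noncomputable def avgKSmallest {N : ℕ} (K : ℕ) (x : Fin N → ℝ) : ℝ :=
  (∑ i ∈ Finset.univ.filter (fun i : Fin N => (i : ℕ) < K), x (Tuple.sort x i)) / K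

/-- Maximum of a real-valued function over a finite nonempty type. -/
noncomputable def fmax {A : Type*} [Fintype A] [Nonempty A] (f : A → ℝ) : ℝ :=
  Finset.univ.sup' Finset.univ_nonempty f

-- nat lemma
lemma my_le_strictMono {K : ℕ} (f : Fin K → ℕ) (hf : StrictMono f) :
    ∀ n (h : n < K), n ≤ f ⟨n, h⟩ := by
  intro n
  induction n with
  | zero => intro h; exact Nat.zero_le _
  | succ n ih =>
    intro h
    have h' : n < K := Nat.lt_of_succ_lt h
    have := hf (show (⟨n, h'⟩ : Fin K) < ⟨n+1, h⟩ by simp [Fin.lt_def])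
    have := ih h'
    omega

lemma filter_eq_map {N K : ℕ} (hK : K ≤ N) :
    Finset.univ.filter (fun i : Fin N => (i : ℕ) < K)
      = Finset.map (Fin.castLEEmb hK) Finset.univ := by
  ext i
  simp only [mem_filter, mem_univ, true_and, mem_map, Fin.castLEEmb, Function.Embedding.coeFn_mk]
  constructor
  · intro h; exact ⟨⟨i, h⟩, by simp [Fin.castLE, Fin.ext_iff]⟩
  · rintro ⟨j, rfl⟩; exact j.2

lemma sum_first_le {N K : ℕ} (y : Fin N → ℝ) (hy : Monotone y) (hK : K ≤ N)
    (t : Finset (Fin N)) (ht : t.card = K) :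
    ∑ i ∈ Finset.univ.filter (fun i : Fin N => (i : ℕ) < K), y i ≤ ∑ j ∈ t, y j := by
  rw [filter_eq_map hK, Finset.sum_map]
  have φ := t.orderIsoOfFin ht
  have hsum : ∑ j ∈ t, y j = ∑ i : Fin K, y (φ i) := by
    rw [← Finset.sum_attach t (fun j => y j)]
    exact (Equiv.sum_comp φ.toEquiv (fun j : t => y j)).symm
  rw [hsum]
  apply Finset.sum_le_sum
  intro i _
  apply hy
  have hmono : StrictMono (fun i : Fin K => ((φ i : Fin N) : ℕ)) := by
    intro a b hab
    exact (φ.strictMono hab : ((φ a : Fin N) < (φ b : Fin N)))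
  have := my_le_strictMono _ hmono i i.2
  simpa [Fin.le_def, Fin.castLEEmb] using this

lemma avgK_mono {N K : ℕ} (x : Fin N → ℝ) (hK1 : 1 ≤ K) (hKN : K + 1 ≤ N) :
    avgKSmallest K x ≤ avgKSmallest (K + 1) x := by
  set y : Fin N → ℝ := fun i => x (Tuple.sort x i) with hy
  have hmono : Monotone y := Tuple.monotone_sort x
  have hKlt : K < N := hKN
  set iK : Fin N := ⟨K, hKlt⟩
  have hins : Finset.univ.filter (fun i : Fin N => (i : ℕ) < K + 1)
      = insert iK (Finset.univ.filter (fun i : Fin N => (i : ℕ) < K)) := by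
    ext i
    simp only [mem_filter, mem_univ, true_and, mem_insert]
    constructor
    · intro h
      rcases Nat.lt_succ_iff_lt_or_eq.1 h with h | h
      · exact Or.inr h
      · exact Or.inl (Fin.ext h)
    · rintro (rfl | h)
      · simp [iK]
      · omega
  have hnot : iK ∉ Finset.univ.filter (fun i : Fin N => (i : ℕ) < K) := by simp [iK]
  set S : ℝ := ∑ i ∈ Finset.univ.filter (fun i : Fin N => (i : ℕ) < K), y i with hS
  have hcard : (Finset.univ.filter (fun i : Fin N => (i : ℕ) < K)).card = K := by
    rw [filter_eq_map (le_of_lt hKlt)]; simp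
  have hpt : ∀ i ∈ Finset.univ.filter (fun i : Fin N => (i : ℕ) < K), y i ≤ y iK := by
    intro i hi
    simp only [mem_filter, mem_univ, true_and] at hi
    exact hmono (by rw [Fin.le_def]; exact le_of_lt hi)
  have hSle : S ≤ K * y iK := by
    have h := Finset.sum_le_card_nsmul
      (Finset.univ.filter (fun i : Fin N => (i : ℕ) < K)) y (y iK) hpt
    rw [hcard] at h
    simpa [nsmul_eq_mul] using h
  have h1 : avgKSmallest K x = S / K := rfl
  have h2 : avgKSmallest (K + 1) x = (y iK + S) / (K + 1) := by
    rw [avgKSmallest, hins, Finset.sum_insert hnot]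
    norm_num
    rfl
  rw [h1, h2]
  rw [div_le_div_iff₀ (by positivity) (by positivity)]
  have hK' : (1 : ℝ) ≤ K := by exact_mod_cast hK1
  nlinarith [hSle]

lemma sumK_eq_inf' {N K : ℕ} (hK : K ≤ N) (x : Fin N → ℝ)
    (hne : (Finset.powersetCard K (Finset.univ : Finset (Fin N))).Nonempty) :
    ∑ i ∈ Finset.univ.filter (fun i : Fin N => (i : ℕ) < K), x (Tuple.sort x i)
      = (Finset.powersetCard K (Finset.univ : Finset (Fin N))).inf' hne
          (fun s => ∑ j ∈ s, x j) := by
  apply le_antisymm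
  · apply Finset.le_inf'
    intro s hs
    rw [Finset.mem_powersetCard] at hs
    -- pull back s along the permutation
    set t : Finset (Fin N) := s.image (Tuple.sort x).symm with ht
    have hinj : Function.Injective (Tuple.sort x).symm := (Tuple.sort x).symm.injective
    have htc : t.card = K := by rw [ht, Finset.card_image_of_injective _ hinj, hs.2]
    have hsum : ∑ j ∈ s, x j = ∑ i ∈ t, x (Tuple.sort x i) := by
      rw [ht, Finset.sum_image (fun a _ b _ h => hinj h)]
      apply Finset.sum_congr rfl
      intro j _
      simp
    rw [hsum]
    exact sum_first_le _ (Tuple.monotone_sort x) hK t htc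
  · have hmem : (Finset.univ.filter (fun i : Fin N => (i : ℕ) < K)).image (Tuple.sort x)
        ∈ Finset.powersetCard K (Finset.univ : Finset (Fin N)) := by
      rw [Finset.mem_powersetCard]
      refine ⟨Finset.subset_univ _, ?_⟩
      rw [Finset.card_image_of_injective _ (Tuple.sort x).injective]
      rw [filter_eq_map hK]; simp
    have h := Finset.inf'_le (fun s => ∑ j ∈ s, x j) hmem
    rwa [Finset.sum_image (fun a _ b _ h => (Tuple.sort x).injective h)] at h

lemma aemeasurable_inf'_fin {Ω : Type*} [MeasurableSpace Ω] {μ : Measure Ω}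
    {ι : Type*} (s : Finset ι) (hs : s.Nonempty) (f : ι → Ω → ℝ)
    (hf : ∀ i ∈ s, AEMeasurable (f i) μ) :
    AEMeasurable (fun ω => s.inf' hs (fun i => f i ω)) μ := by
  induction hs using Finset.Nonempty.cons_induction with
  | singleton i => simp only [Finset.inf'_singleton]; exact hf i (by simp)
  | cons i s his hsne ih =>
    simp only [Finset.inf'_cons hsne]
    exact (hf i (by simp)).inf (ih (fun j hj => hf j (by simp [hj])))

lemma aemeasurable_sup'_fin {Ω : Type*} [MeasurableSpace Ω] {μ : Measure Ω}
    {ι : Type*} (s : Finset ι) (hs : s.Nonempty) (f : ι → Ω → ℝ)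
    (hf : ∀ i ∈ s, AEMeasurable (f i) μ) :
    AEMeasurable (fun ω => s.sup' hs (fun i => f i ω)) μ := by
  induction hs using Finset.Nonempty.cons_induction with
  | singleton i => simp only [Finset.sup'_singleton]; exact hf i (by simp)
  | cons i s his hsne ih =>
    simp only [Finset.sup'_cons hsne]
    exact (hf i (by simp)).sup (ih (fun j hj => hf j (by simp [hj])))

lemma abs_fmax_le {A : Type*} [Fintype A] [Nonempty A] (f : A → ℝ) :
    |fmax f| ≤ ∑ a, |f a| := by
  rw [abs_le]
  constructor
  · obtain ⟨a0⟩ := (inferInstance : Nonempty A)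
    have h1 : f a0 ≤ fmax f := Finset.le_sup' f (Finset.mem_univ a0)
    have h2 : |f a0| ≤ ∑ a, |f a| :=
      Finset.single_le_sum (fun a _ => abs_nonneg (f a)) (Finset.mem_univ a0)
    have := neg_abs_le (f a0)
    linarith
  · apply Finset.sup'_le
    intro a _
    exact le_trans (le_abs_self _)
      (Finset.single_le_sum (fun a _ => abs_nonneg (f a)) (Finset.mem_univ a))

lemma abs_avgK_le {N L : ℕ} (hL : 1 ≤ L) (x : Fin N → ℝ) :
    |avgKSmallest L x| ≤ ∑ j, |x j| := by
  rw [avgKSmallest, abs_div]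
  have h1 : |(L : ℝ)| = (L : ℝ) := abs_of_nonneg (by positivity)
  rw [h1]
  have h2 : |∑ i ∈ Finset.univ.filter (fun i : Fin N => (i : ℕ) < L), x (Tuple.sort x i)|
      ≤ ∑ j, |x j| := by
    refine le_trans (Finset.abs_sum_le_sum_abs _ _) ?_
    refine le_trans (Finset.sum_le_sum_of_subset_of_nonneg (Finset.subset_univ _)
      (fun i _ _ => abs_nonneg _)) ?_
    rw [Equiv.sum_comp (Tuple.sort x) (fun j => |x j|)]
  exact le_trans (div_le_self (abs_nonneg _) (by exact_mod_cast hL)) h2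

/-- **Theorem 1, Part 2 (AQE).** In the tabular AQE setting, the expected post-update
estimation bias is nondecreasing in the keep parameter `K`:
for all `1 ≤ K ≤ N - 1`, `E[Z_{K,N}] ≤ E[Z_{K+1,N}]`. -/
theorem aqe_expected_bias_mono_in_keep
    {Ω : Type*} [MeasurableSpace Ω] (μ : Measure Ω) [IsProbabilityMeasure μ]
    {A : Type*} [Fintype A] [Nonempty A]
    (Qpi : A → ℝ) (γ : ℝ) (hγ : 0 < γ)
    (N : ℕ)
    (e : Fin N → A → Ω → ℝ)
    (hint : ∀ j a, Integrable (e j a) μ)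
    (hmean : ∀ j a, ∫ ω, e j a ω ∂μ = 0)
    (hident : ∀ j a j' a', IdentDistrib (e j a) (e j' a') μ μ)
    (hindep : iIndepFun
      (fun p : Fin N × A => e p.1 p.2) μ)
    (Q : Fin N → A → Ω → ℝ) (hQ : ∀ j a ω, Q j a ω = Qpi a + e j a ω)
    (K : ℕ) (hK1 : 1 ≤ K) (hKN : K + 1 ≤ N) :
    ∫ ω, γ * (fmax (fun a => avgKSmallest K (fun j => Q j a ω)) - fmax Qpi) ∂μ
      ≤ ∫ ω, γ * (fmax (fun a => avgKSmallest (K + 1) (fun j => Q j a ω)) - fmax Qpi) ∂μ := by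
  have hQint : ∀ j a, Integrable (Q j a) μ := by
    intro j a
    have h : Integrable (fun ω => Qpi a + e j a ω) μ := (integrable_const _).add (hint j a)
    exact h.congr (Filter.Eventually.of_forall fun ω => (hQ j a ω).symm)
  have key : ∀ L : ℕ, 1 ≤ L → L ≤ N →
      Integrable (fun ω => γ * (fmax (fun a => avgKSmallest L (fun j => Q j a ω)) - fmax Qpi)) μ := by
    intro L hL1 hLN
    have hne : (Finset.powersetCard L (Finset.univ : Finset (Fin N))).Nonempty := by
      rw [Finset.powersetCard_nonempty]
      simpa using hLN
    have hgae : ∀ a : A, AEMeasurable (fun ω => avgKSmallest L (fun j => Q j a ω)) μ := by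
      intro a
      have heq : (fun ω => avgKSmallest L (fun j => Q j a ω))
          = fun ω => ((Finset.powersetCard L (Finset.univ : Finset (Fin N))).inf' hne
              (fun s => ∑ j ∈ s, Q j a ω)) / L := by
        funext ω
        rw [avgKSmallest]
        congr 1
        exact sumK_eq_inf' hLN (fun j => Q j a ω) hne
      rw [heq]
      exact (aemeasurable_inf'_fin _ hne _
        (fun s _ => Finset.aemeasurable_fun_sum s (fun j _ => (hQint j a).aemeasurable))).div_const _
    have hFae : AEMeasurable (fun ω => fmax (fun a => avgKSmallest L (fun j => Q j a ω))) μ :=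
      aemeasurable_sup'_fin Finset.univ Finset.univ_nonempty _ (fun a _ => hgae a)
    have hB : Integrable (fun ω => ∑ a : A, ∑ j : Fin N, |Q j a ω|) μ :=
      integrable_finset_sum _ (fun a _ => integrable_finset_sum _ (fun j _ => (hQint j a).abs))
    have hFint : Integrable (fun ω => fmax (fun a => avgKSmallest L (fun j => Q j a ω))) μ := by
      refine hB.mono' hFae.aestronglyMeasurable ?_
      apply Filter.Eventually.of_forall
      intro ω
      rw [Real.norm_eq_abs]
      refine le_trans (abs_fmax_le _) (Finset.sum_le_sum fun a _ => ?_)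
      exact abs_avgK_le hL1 _
    exact ((hFint.sub (integrable_const _)).const_mul γ)
  refine integral_mono (key K hK1 (by omega)) (key (K+1) (by omega) hKN) ?_
  intro ω
  have hfm : fmax (fun a => avgKSmallest K (fun j => Q j a ω))
      ≤ fmax (fun a => avgKSmallest (K+1) (fun j => Q j a ω)) :=
    Finset.sup'_mono_fun (fun a _ => avgK_mono _ hK1 hKN)
  have := sub_le_sub_right hfm (fmax Qpi)
  exact mul_le_mul_of_nonneg_left this hγ.le
end

section
/- (Theorem 1, Part 3.) In the AQE tabular setting, the expected post-update estimation bias is nonincreasing in the ensemble size N: for all integers 1 ≤ K ≤ N, E[Z_{K,N+1}] ≤ E[Z_{K,N}]. -/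
open MeasureTheory ProbabilityTheory Finset

lemma powersetCard_univ_nonempty {M K : ℕ} (h : K ≤ M) :
    ((Finset.univ : Finset (Fin M)).powersetCard K).Nonempty := by
  obtain ⟨t, hts, htc⟩ := Finset.exists_subset_card_eq
    (show K ≤ (Finset.univ : Finset (Fin M)).card by simpa using h)
  exact ⟨t, Finset.mem_powersetCard.2 ⟨hts, htc⟩⟩

/-- The sum of the `K` smallest entries equals the minimum over all `K`-subsets of the sum. -/
lemma sortedSum_eq_inf' {N K : ℕ} (hKN : K ≤ N) (x : Fin N → ℝ)
    (hne : ((Finset.univ : Finset (Fin N)).powersetCard K).Nonempty) :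
    ∑ i ∈ Finset.univ.filter (fun i : Fin N => (i : ℕ) < K), x (Tuple.sort x i)
      = (Finset.univ.powersetCard K).inf' hne (fun S => ∑ i ∈ S, x i) := by
  set F : Finset (Fin N) := Finset.univ.filter (fun i : Fin N => (i : ℕ) < K) with hF
  set T : Finset (Fin N) := F.image (Tuple.sort x) with hT
  have hFeq : F = Finset.image (Fin.castLE hKN) Finset.univ := by
    ext i
    simp only [hF, Finset.mem_filter, Finset.mem_univ, true_and, Finset.mem_image]
    constructor
    · intro h; exact ⟨⟨(i : ℕ), h⟩, Fin.ext rfl⟩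
    · rintro ⟨j, rfl⟩; simpa using j.2
  have hFcard : F.card = K := by
    rw [hFeq, Finset.card_image_of_injective _ (Fin.castLE_injective hKN), Finset.card_univ,
      Fintype.card_fin]
  have hTcard : T.card = K := by
    rw [hT, Finset.card_image_of_injective _ (Tuple.sort x).injective, hFcard]
  have hsumT : ∑ i ∈ T, x i = ∑ i ∈ F, x (Tuple.sort x i) :=
    Finset.sum_image (fun a _ b _ h => (Tuple.sort x).injective h)
  -- every element of T has value ≤ every element outside T
  have hkey : ∀ t ∈ T, ∀ s, s ∉ T → x t ≤ x s := by
    intro t ht s hs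
    obtain ⟨j, hj, rfl⟩ := Finset.mem_image.1 ht
    have hjK : (j : ℕ) < K := (Finset.mem_filter.1 hj).2
    set j' := (Tuple.sort x).symm s with hj'
    have hsj' : Tuple.sort x j' = s := (Tuple.sort x).apply_symm_apply s
    have hj'F : j' ∉ F := by
      intro h
      exact hs (Finset.mem_image.2 ⟨j', h, hsj'⟩)
    have hj'K : K ≤ (j' : ℕ) := by
      by_contra h
      exact hj'F (Finset.mem_filter.2 ⟨Finset.mem_univ _, not_le.1 h⟩)
    have hle : j ≤ j' := Fin.le_def.2 (hjK.le.trans hj'K)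
    have := Tuple.monotone_sort x hle
    simpa [hsj'] using this
  apply le_antisymm
  · apply Finset.le_inf'
    intro S hS
    have hScard : S.card = K := (Finset.mem_powersetCard.1 hS).2
    rw [← hsumT]
    have hsplitT : ∑ i ∈ T ∩ S, x i + ∑ i ∈ T \ S, x i = ∑ i ∈ T, x i :=
      Finset.sum_inter_add_sum_sdiff T S x
    have hsplitS : ∑ i ∈ S ∩ T, x i + ∑ i ∈ S \ T, x i = ∑ i ∈ S, x i :=
      Finset.sum_inter_add_sum_sdiff S T x
    have hcards : (T \ S).card = (S \ T).card :=
      Finset.card_sdiff_comm (by rw [hTcard, hScard])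
    have hdiff : ∑ i ∈ T \ S, x i ≤ ∑ i ∈ S \ T, x i := by
      rcases Finset.eq_empty_or_nonempty (S \ T) with hV | hV
      · have : (T \ S) = ∅ := Finset.card_eq_zero.1 (by rw [hcards, hV]; simp)
        simp [this, hV]
      · set m := (S \ T).inf' hV x with hm
        calc ∑ i ∈ T \ S, x i ≤ (T \ S).card • m := by
              apply Finset.sum_le_card_nsmul
              intro t ht
              apply Finset.le_inf'
              intro s hs
              exact hkey t (Finset.mem_sdiff.1 ht).1 s (Finset.mem_sdiff.1 hs).2
          _ = (S \ T).card • m := by rw [hcards]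
          _ ≤ ∑ i ∈ S \ T, x i := Finset.card_nsmul_le_sum _ _ _ (fun s hs => Finset.inf'_le _ hs)
    calc ∑ i ∈ T, x i = ∑ i ∈ T ∩ S, x i + ∑ i ∈ T \ S, x i := hsplitT.symm
      _ ≤ ∑ i ∈ S ∩ T, x i + ∑ i ∈ S \ T, x i := by
          rw [Finset.inter_comm]; exact add_le_add le_rfl hdiff
      _ = ∑ i ∈ S, x i := hsplitS
  · exact le_trans (Finset.inf'_le (fun S => ∑ i ∈ S, x i)
      (Finset.mem_powersetCard.2 ⟨Finset.subset_univ _, hTcard⟩)) (le_of_eq hsumT)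

/-- Adding one more sample can only decrease the average of the `K` smallest. -/
lemma avgKSmallest_succ_le {N K : ℕ} (hK1 : 1 ≤ K) (hKN : K ≤ N) (x : Fin (N + 1) → ℝ) :
    avgKSmallest K x ≤ avgKSmallest K (x ∘ Fin.castSucc) := by
  have hne1 := powersetCard_univ_nonempty (K := K) (M := N + 1) (hKN.trans (Nat.le_succ N))
  have hne2 := powersetCard_univ_nonempty (K := K) (M := N) hKN
  unfold avgKSmallest
  rw [sortedSum_eq_inf' (hKN.trans (Nat.le_succ N)) x hne1,
    sortedSum_eq_inf' hKN (x ∘ Fin.castSucc) hne2]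
  have hKpos : (0 : ℝ) < K := by exact_mod_cast hK1
  refine div_le_div_of_nonneg_right ?_ hKpos.le
  apply Finset.le_inf'
  intro S hS
  have hScard : S.card = K := (Finset.mem_powersetCard.1 hS).2
  have hmem : S.map Fin.castSuccEmb ∈ (Finset.univ : Finset (Fin (N + 1))).powersetCard K :=
    Finset.mem_powersetCard.2 ⟨Finset.subset_univ _, by rw [Finset.card_map, hScard]⟩
  refine (Finset.inf'_le _ hmem).trans_eq ?_
  rw [Finset.sum_map]
  rfl

lemma integrable_finset_sup' {Ω : Type*} [MeasurableSpace Ω] {μ : Measure Ω}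
    {ι : Type*} (s : Finset ι) (hs : s.Nonempty) (f : ι → Ω → ℝ)
    (hf : ∀ i ∈ s, Integrable (f i) μ) :
    Integrable (fun ω => s.sup' hs (fun i => f i ω)) μ := by
  induction hs using Finset.Nonempty.cons_induction with
  | singleton a => simpa using hf a (by simp)
  | cons a s ha hs ih =>
      simp only [Finset.sup'_cons hs]
      exact (hf a (by simp)).sup (ih (fun i hi => hf i (Finset.mem_cons_of_mem hi)))

lemma integrable_finset_inf' {Ω : Type*} [MeasurableSpace Ω] {μ : Measure Ω}
    {ι : Type*} (s : Finset ι) (hs : s.Nonempty) (f : ι → Ω → ℝ)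
    (hf : ∀ i ∈ s, Integrable (f i) μ) :
    Integrable (fun ω => s.inf' hs (fun i => f i ω)) μ := by
  induction hs using Finset.Nonempty.cons_induction with
  | singleton a => simpa using hf a (by simp)
  | cons a s ha hs ih =>
      simp only [Finset.inf'_cons hs]
      exact (hf a (by simp)).inf (ih (fun i hi => hf i (Finset.mem_cons_of_mem hi)))

/-- **Theorem 1, Part 3 (AQE).** In the tabular AQE setting, the expected post-update
estimation bias is nonincreasing in the ensemble size `N`:
for all `1 ≤ K ≤ N`, `E[Z_{K,N+1}] ≤ E[Z_{K,N}]`. -/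
theorem aqe_expected_bias_antitone_in_ensemble_size
    {Ω : Type*} [MeasurableSpace Ω] (μ : Measure Ω) [IsProbabilityMeasure μ]
    {A : Type*} [Fintype A] [Nonempty A]
    (Qpi : A → ℝ) (γ : ℝ) (hγ : 0 < γ)
    (e : ℕ → A → Ω → ℝ)
    (hint : ∀ j a, Integrable (e j a) μ)
    (hmean : ∀ j a, ∫ ω, e j a ω ∂μ = 0)
    (hident : ∀ j a j' a', IdentDistrib (e j a) (e j' a') μ μ)
    (hindep : iIndepFun (fun p : ℕ × A => e p.1 p.2) μ)
    (Q : ℕ → A → Ω → ℝ) (hQ : ∀ j a ω, Q j a ω = Qpi a + e j a ω)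
    (N K : ℕ) (hK1 : 1 ≤ K) (hKN : K ≤ N) :
    ∫ ω, γ * (fmax (fun a => avgKSmallest K (fun j : Fin (N + 1) => Q j a ω)) - fmax Qpi) ∂μ
      ≤ ∫ ω, γ * (fmax (fun a => avgKSmallest K (fun j : Fin N => Q j a ω)) - fmax Qpi) ∂μ := by
  -- integrability of both integrands
  have hQint : ∀ (j : ℕ) (a : A), Integrable (fun ω => Q j a ω) μ := by
    intro j a
    have : (fun ω => Q j a ω) = fun ω => Qpi a + e j a ω := by funext ω; exact hQ j a ω
    rw [this]
    exact (integrable_const _).add (hint j a)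
  have hintM : ∀ (M : ℕ), K ≤ M →
      Integrable (fun ω => fmax (fun a => avgKSmallest K (fun j : Fin M => Q j a ω)) - fmax Qpi) μ := by
    intro M hKM
    apply Integrable.sub ?_ (integrable_const _)
    have hne := powersetCard_univ_nonempty (K := K) (M := M) hKM
    have heq : (fun ω => fmax (fun a => avgKSmallest K (fun j : Fin M => Q j a ω)))
        = fun ω => Finset.univ.sup' Finset.univ_nonempty
            (fun a : A => ((Finset.univ.powersetCard K).inf' hne
              (fun S : Finset (Fin M) => ∑ i ∈ S, Q i a ω)) / K) := by
      funext ω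
      unfold fmax
      congr 1
      funext a
      unfold avgKSmallest
      rw [sortedSum_eq_inf' hKM (fun j : Fin M => Q (j : ℕ) a ω) hne]
    rw [heq]
    apply integrable_finset_sup'
    intro a _
    apply Integrable.div_const
    apply integrable_finset_inf'
    intro S _
    exact integrable_finset_sum S (fun i _ => hQint i a)
  have h1 := hintM (N + 1) (hKN.trans (Nat.le_succ N))
  have h2 := hintM N hKN
  apply integral_mono (h1.const_mul γ) (h2.const_mul γ)
  intro ω
  apply mul_le_mul_of_nonneg_left ?_ hγ.le
  apply sub_le_sub_right
  unfold fmax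
  apply Finset.sup'_mono_fun
  intro a _
  have hfe : (fun j : Fin N => Q (j : ℕ) a ω)
      = (fun j : Fin (N + 1) => Q (j : ℕ) a ω) ∘ Fin.castSucc := by
    funext j; simp [Fin.coe_castSucc]
  rw [hfe]
  exact avgKSmallest_succ_le hK1 hKN _
end

section
/- (Limit of the expected bias for K = 1, established inside the proof of Theorem 1, Part 4.) In the AQE tabular setting, suppose additionally that for some constant c > 0 the errors satisfy e^j(a) ≤ c almost surely for all j and a, and that for every a ∈ A the quantity τ_a := inf{ x ∈ ℝ : P(Q^1(a) ≤ x) > 0 } is finite. Then, as N → ∞, E[Z_{1,N}] converges to γ·( max_{a∈A} τ_a − max_{a∈A} Qπ(a) ). In particular, if τ_a < max_{a'∈A} Qπ(a') for all a ∈ A, then E[Z_{1,N}] < 0 for all sufficiently large N. -/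
open MeasureTheory ProbabilityTheory Finset Filter

lemma avgKSmallest_one {N : ℕ} (x : Fin (N + 1) → ℝ) :
    avgKSmallest 1 x = Finset.univ.inf' Finset.univ_nonempty x := by
  have hfilter : Finset.univ.filter (fun i : Fin (N + 1) => (i : ℕ) < 1)
      = {(0 : Fin (N + 1))} := by
    ext i
    simp only [Finset.mem_filter, Finset.mem_univ, true_and, Finset.mem_singleton]
    rw [Fin.ext_iff, Nat.lt_one_iff, Fin.val_zero]
  rw [avgKSmallest, hfilter, Finset.sum_singleton, Nat.cast_one, div_one]
  refine le_antisymm (Finset.le_inf' _ _ fun b _ => ?_)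
    (Finset.inf'_le _ (Finset.mem_univ _))
  have h := Tuple.monotone_sort x (Fin.zero_le ((Tuple.sort x).symm b))
  simpa using h

lemma aemeasurable_finset_sup' {Ω ι : Type*} [MeasurableSpace Ω] {μ : Measure Ω}
    {s : Finset ι} (hs : s.Nonempty) {f : ι → Ω → ℝ}
    (hf : ∀ i ∈ s, AEMeasurable (f i) μ) : AEMeasurable (s.sup' hs f) μ :=
  Finset.sup'_induction (p := fun g => AEMeasurable g μ) hs _ (fun _f hf _g hg => hf.sup hg) hf

lemma aemeasurable_finset_inf' {Ω ι : Type*} [MeasurableSpace Ω] {μ : Measure Ω}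
    {s : Finset ι} (hs : s.Nonempty) {f : ι → Ω → ℝ}
    (hf : ∀ i ∈ s, AEMeasurable (f i) μ) : AEMeasurable (s.inf' hs f) μ :=
  Finset.inf'_induction (p := fun g => AEMeasurable g μ) hs _ (fun _f hf _g hg => hf.inf hg) hf

lemma continuous_fmax {A : Type*} [Fintype A] [Nonempty A] :
    Continuous (fun v : A → ℝ => fmax v) := by
  have h : (fun v : A → ℝ => fmax v)
      = Finset.univ.sup' Finset.univ_nonempty (fun a (v : A → ℝ) => v a) := by
    funext v
    rw [Finset.sup'_apply]
    rfl
  rw [h]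
  exact Finset.sup'_induction _ _ (fun _f hf _g hg => hf.sup hg)
    (fun a _ => continuous_apply a)

lemma tendsto_fmax {A : Type*} [Fintype A] [Nonempty A] {f : ℕ → A → ℝ} {g : A → ℝ}
    (h : ∀ a, Tendsto (fun n => f n a) atTop (nhds (g a))) :
    Tendsto (fun n => fmax (f n)) atTop (nhds (fmax g)) := by
  have hg' : Tendsto (fun n => (f n : A → ℝ)) atTop (nhds g) := tendsto_pi_nhds.2 h
  exact (continuous_fmax.tendsto g).comp hg'

/-- **Limit of the expected bias for `K = 1` (inside the proof of Theorem 1, Part 4).**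
In the tabular AQE setting, if the errors are bounded above by a constant `c > 0` almost surely
and each essential infimum `τ_a := inf {x : P(Q^1(a) ≤ x) > 0}` is finite, then
`E[Z_{1,N}] → γ·(max_a τ_a − max_a Qπ(a))` as `N → ∞`; in particular, if `τ_a < max_{a'} Qπ(a')`
for all `a`, then `E[Z_{1,N}] < 0` for all sufficiently large `N`. -/
theorem aqe_expected_bias_keep_one_tendsto
    {Ω : Type*} [MeasurableSpace Ω] (μ : Measure Ω) [IsProbabilityMeasure μ]
    {A : Type*} [Fintype A] [Nonempty A]
    (Qpi : A → ℝ) (γ : ℝ) (hγ : 0 < γ)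
    (e : ℕ → A → Ω → ℝ)
    (hint : ∀ j a, Integrable (e j a) μ)
    (hmean : ∀ j a, ∫ ω, e j a ω ∂μ = 0)
    (hident : ∀ j a j' a', IdentDistrib (e j a) (e j' a') μ μ)
    (hindep : iIndepFun
      (fun p : ℕ × A => e p.1 p.2) μ)
    (Q : ℕ → A → Ω → ℝ) (hQ : ∀ j a ω, Q j a ω = Qpi a + e j a ω)
    (c : ℝ) (hc : 0 < c) (hbound : ∀ j a, ∀ᵐ ω ∂μ, e j a ω ≤ c)
    (τ : A → ℝ) (hτ : ∀ a, τ a = sInf {x : ℝ | 0 < μ {ω | Q 0 a ω ≤ x}})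
    (hne : ∀ a, {x : ℝ | 0 < μ {ω | Q 0 a ω ≤ x}}.Nonempty)
    (hbdd : ∀ a, BddBelow {x : ℝ | 0 < μ {ω | Q 0 a ω ≤ x}}) :
    Tendsto
      (fun N : ℕ =>
        ∫ ω, γ * (fmax (fun a => avgKSmallest 1 (fun j : Fin (N + 1) => Q j a ω)) - fmax Qpi) ∂μ)
      atTop (nhds (γ * (fmax τ - fmax Qpi)))
    ∧ ((∀ a, τ a < fmax Qpi) →
        ∀ᶠ N : ℕ in atTop,
          ∫ ω, γ * (fmax (fun a => avgKSmallest 1 (fun j : Fin (N + 1) => Q j a ω)) - fmax Qpi) ∂μ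
            < 0) := by
  classical
  set F : ℕ → Ω → ℝ := fun N ω =>
    fmax (fun a => Finset.univ.inf' Finset.univ_nonempty (fun j : Fin (N + 1) => Q j a ω))
    with hF
  have hrw : ∀ N (ω : Ω),
      fmax (fun a => avgKSmallest 1 (fun j : Fin (N + 1) => Q j a ω)) = F N ω := by
    intro N ω
    simp only [hF]
    congr 1
    funext a
    exact avgKSmallest_one _
  have hQm : ∀ j a, AEMeasurable (Q j a) μ := by
    intro j a
    have h : Q j a = fun ω => Qpi a + e j a ω := funext (hQ j a)
    rw [h]
    exact (hint j a).aemeasurable.const_add _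
  have hQint : ∀ j a, Integrable (Q j a) μ := by
    intro j a
    have h : Q j a = fun ω => Qpi a + e j a ω := funext (hQ j a)
    rw [h]
    exact (integrable_const _).add (hint j a)
  have hid : ∀ j a, IdentDistrib (Q j a) (Q 0 a) μ μ := by
    intro j a
    have h1 : Q j a = (fun x => Qpi a + x) ∘ (e j a) := funext (hQ j a)
    have h2 : Q 0 a = (fun x => Qpi a + x) ∘ (e 0 a) := funext (hQ 0 a)
    rw [h1, h2]
    exact (hident j a 0 a).comp (measurable_const.add measurable_id)
  have hdist : ∀ j a (s : Set ℝ), MeasurableSet s → μ (Q j a ⁻¹' s) = μ (Q 0 a ⁻¹' s) :=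
    fun j a s hs => (hid j a).measure_mem_eq hs
  -- a.e. lower bound
  have hlow_null : ∀ j a, μ {ω | Q j a ω < τ a} = 0 := by
    intro j a
    have hsub : {ω | Q j a ω < τ a}
        ⊆ ⋃ q : {q : ℚ // (q : ℝ) < τ a}, {ω | Q j a ω ≤ (q : ℝ)} := by
      intro ω hω
      have hω' : Q j a ω < τ a := hω
      obtain ⟨q, hq1, hq2⟩ := exists_rat_btwn hω'
      exact Set.mem_iUnion.2 ⟨⟨q, hq2⟩, le_of_lt hq1⟩
    refine measure_mono_null hsub (measure_iUnion_null fun q => ?_)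
    have h0 : μ {ω | Q 0 a ω ≤ (q : ℝ)} = 0 := by
      by_contra h
      have hpos : (q : ℝ) ∈ {x : ℝ | 0 < μ {ω | Q 0 a ω ≤ x}} :=
        pos_iff_ne_zero.2 h
      have hle := csInf_le (hbdd a) hpos
      rw [← hτ a] at hle
      exact absurd q.2 (not_lt.2 hle)
    calc μ {ω | Q j a ω ≤ (q : ℝ)} = μ (Q j a ⁻¹' Set.Iic (q : ℝ)) := rfl
      _ = μ (Q 0 a ⁻¹' Set.Iic (q : ℝ)) := hdist j a _ measurableSet_Iic
      _ = 0 := h0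
  have hlow : ∀ᵐ ω ∂μ, ∀ j a, τ a ≤ Q j a ω := by
    rw [ae_iff]
    have hsub : {ω | ¬ ∀ j a, τ a ≤ Q j a ω} ⊆ ⋃ j, ⋃ a, {ω | Q j a ω < τ a} := by
      intro ω hω
      push_neg at hω
      obtain ⟨j, a, h⟩ := hω
      exact Set.mem_iUnion.2 ⟨j, Set.mem_iUnion.2 ⟨a, h⟩⟩
    exact measure_mono_null hsub
      (measure_iUnion_null fun j => measure_iUnion_null fun a => hlow_null j a)
  -- key upper bound: staying above any `t > τ a` forever has probability zero
  have hupper : ∀ a (t : ℝ), τ a < t → μ {ω | ∀ j : ℕ, t < Q j a ω} = 0 := by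
    intro a t ht
    set r := t - Qpi a with hr
    set p := μ (e 0 a ⁻¹' Set.Ioi r) with hp
    have hIic : 0 < μ (e 0 a ⁻¹' Set.Iic r) := by
      have ht' : sInf {x : ℝ | 0 < μ {ω | Q 0 a ω ≤ x}} < t := by rw [← hτ a]; exact ht
      obtain ⟨x, hxS, hxt⟩ := (csInf_lt_iff (hbdd a) (hne a)).1 ht'
      refine lt_of_lt_of_le hxS (measure_mono ?_)
      intro ω hω
      simp only [Set.mem_setOf_eq] at hω
      simp only [Set.mem_preimage, Set.mem_Iic]
      have hQω := hQ 0 a ω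
      linarith
    have hplt : p < 1 := by
      have hcompl : e 0 a ⁻¹' Set.Ioi r = (e 0 a ⁻¹' Set.Iic r)ᶜ := by
        rw [← Set.preimage_compl, Set.compl_Iic]
      rw [hp, hcompl,
        prob_compl_eq_one_sub₀ ((hint 0 a).aemeasurable.nullMeasurable measurableSet_Iic)]
      exact ENNReal.sub_lt_self ENNReal.one_ne_top one_ne_zero hIic.ne'
    have hprod : ∀ N : ℕ, μ {ω | ∀ j : ℕ, t < Q j a ω} ≤ p ^ (N + 1) := by
      intro N
      have hsubset : {ω | ∀ j : ℕ, t < Q j a ω}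
          ⊆ ⋂ j ∈ Finset.range (N + 1), e j a ⁻¹' Set.Ioi r := by
        intro ω hω
        simp only [Set.mem_iInter, Set.mem_preimage, Set.mem_Ioi]
        intro j _
        have h := hω j
        have hQω := hQ j a ω
        linarith
      have hS : μ (⋂ j ∈ Finset.range (N + 1), e j a ⁻¹' Set.Ioi r)
          = ∏ j ∈ Finset.range (N + 1), μ (e j a ⁻¹' Set.Ioi r) := by
        have key := hindep.measure_inter_preimage_eq_mul
          (S := (Finset.range (N + 1)).image (fun j => (j, a)))
          (sets := fun _ => Set.Ioi r) (fun _ _ => measurableSet_Ioi)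
        have hinj : ∀ x ∈ Finset.range (N + 1), ∀ y ∈ Finset.range (N + 1),
            (fun j => (j, a)) x = (fun j => (j, a)) y → x = y := by
          intro x _ y _ h
          exact (Prod.ext_iff.1 h).1
        rw [Finset.prod_image hinj] at key
        have hsets : (⋂ i ∈ (Finset.range (N + 1)).image (fun j => (j, a)),
            (fun p : ℕ × A => e p.1 p.2) i ⁻¹' Set.Ioi r)
            = ⋂ j ∈ Finset.range (N + 1), e j a ⁻¹' Set.Ioi r := by
          ext ω
          simp only [Set.mem_iInter, Finset.mem_image, Finset.mem_range]
          constructor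
          · intro h j hj
            exact h (j, a) ⟨j, hj, rfl⟩
          · rintro h q ⟨j, hj, rfl⟩
            exact h j hj
        rw [hsets] at key
        exact key
      have hfac : ∀ j, μ (e j a ⁻¹' Set.Ioi r) = p :=
        fun j => (hident j a 0 a).measure_mem_eq measurableSet_Ioi
      calc μ {ω | ∀ j : ℕ, t < Q j a ω}
          ≤ μ (⋂ j ∈ Finset.range (N + 1), e j a ⁻¹' Set.Ioi r) := measure_mono hsubset
        _ = ∏ j ∈ Finset.range (N + 1), μ (e j a ⁻¹' Set.Ioi r) := hS
        _ = p ^ (N + 1) := by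
            simp only [hfac, Finset.prod_const, Finset.card_range]
    have hlim : Tendsto (fun N : ℕ => p ^ (N + 1)) atTop (nhds 0) :=
      (ENNReal.tendsto_pow_atTop_nhds_zero_of_lt_one hplt).comp (tendsto_add_atTop_nat 1)
    exact le_zero_iff.1 (ge_of_tendsto' hlim hprod)
  -- a.e. : for every `a` and `k`, some sample gets within `1/(k+1)` of `τ a`
  have hups : ∀ᵐ ω ∂μ, ∀ (a : A) (k : ℕ), ∃ j : ℕ, Q j a ω ≤ τ a + 1 / ((k : ℝ) + 1) := by
    rw [ae_iff]
    have hsub : {ω | ¬ ∀ (a : A) (k : ℕ), ∃ j : ℕ, Q j a ω ≤ τ a + 1 / ((k : ℝ) + 1)}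
        ⊆ ⋃ a, ⋃ k : ℕ, {ω | ∀ j : ℕ, τ a + 1 / ((k : ℝ) + 1) < Q j a ω} := by
      intro ω hω
      push_neg at hω
      obtain ⟨a, k, h⟩ := hω
      exact Set.mem_iUnion.2 ⟨a, Set.mem_iUnion.2 ⟨k, fun j => h j⟩⟩
    refine measure_mono_null hsub (measure_iUnion_null fun a => measure_iUnion_null fun k =>
      hupper a _ ?_)
    have : (0 : ℝ) < 1 / ((k : ℝ) + 1) := by positivity
    linarith
  -- a.e. convergence of F N
  have hconv : ∀ᵐ ω ∂μ, Tendsto (fun N => F N ω) atTop (nhds (fmax τ)) := by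
    filter_upwards [hlow, hups] with ω h1 h2
    have hten : ∀ a, Tendsto (fun N => Finset.univ.inf' Finset.univ_nonempty
        (fun j : Fin (N + 1) => Q j a ω)) atTop (nhds (τ a)) := by
      intro a
      rw [tendsto_order]
      constructor
      · intro l hl
        refine Filter.Eventually.of_forall fun N => ?_
        exact lt_of_lt_of_le hl (Finset.le_inf' _ _ fun j _ => h1 j a)
      · intro u hu
        obtain ⟨k, hk⟩ := exists_nat_one_div_lt (sub_pos.2 hu)
        obtain ⟨j, hj⟩ := h2 a k
        have hju : Q j a ω < u := by linarith
        filter_upwards [eventually_ge_atTop j] with N hN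
        have hjN : j < N + 1 := Nat.lt_succ_of_le hN
        calc Finset.univ.inf' Finset.univ_nonempty (fun j' : Fin (N + 1) => Q j' a ω)
            ≤ Q j a ω := Finset.inf'_le _ (Finset.mem_univ (⟨j, hjN⟩ : Fin (N + 1)))
          _ < u := hju
    exact tendsto_fmax hten
  -- measurability
  have hFmeas : ∀ N, AEMeasurable (F N) μ := by
    intro N
    have h : F N = Finset.univ.sup' Finset.univ_nonempty
        (fun a => Finset.univ.inf' Finset.univ_nonempty (fun j : Fin (N + 1) => Q j a)) := by
      funext ω
      simp only [hF, fmax, Finset.sup'_apply, Finset.inf'_apply]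
    rw [h]
    exact aemeasurable_finset_sup' _ fun a _ =>
      aemeasurable_finset_inf' _ fun j _ => hQm j a
  -- domination
  have hg_int : Integrable (fun ω => |fmax τ| + ∑ a, |Q 0 a ω|) μ :=
    (integrable_const _).add (integrable_finset_sum _ fun a _ => (hQint 0 a).abs)
  have hbound' : ∀ N, ∀ᵐ ω ∂μ, ‖F N ω‖ ≤ |fmax τ| + ∑ a, |Q 0 a ω| := by
    intro N
    filter_upwards [hlow] with ω h1
    have hlb : fmax τ ≤ F N ω := by
      simp only [hF, fmax]
      exact Finset.sup'_mono_fun fun a _ => Finset.le_inf' _ _ fun j _ => h1 j a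
    have hub : F N ω ≤ ∑ a, |Q 0 a ω| := by
      simp only [hF, fmax]
      refine Finset.sup'_le _ _ fun a _ => ?_
      have h0 : Finset.univ.inf' Finset.univ_nonempty (fun j : Fin (N + 1) => Q j a ω)
          ≤ Q 0 a ω := Finset.inf'_le _ (Finset.mem_univ (0 : Fin (N + 1)))
      exact h0.trans ((le_abs_self _).trans
        (Finset.single_le_sum (fun a _ => abs_nonneg (Q 0 a ω)) (Finset.mem_univ a)))
    have hsum : (0 : ℝ) ≤ ∑ a, |Q 0 a ω| := Finset.sum_nonneg fun a _ => abs_nonneg _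
    rw [Real.norm_eq_abs, abs_le]
    constructor
    · have := neg_abs_le (fmax τ)
      linarith
    · have := abs_nonneg (fmax τ)
      linarith
  have hFint : ∀ N, Integrable (F N) μ := fun N =>
    Integrable.mono' hg_int (hFmeas N).aestronglyMeasurable (hbound' N)
  have key : Tendsto (fun N => ∫ ω, F N ω ∂μ) atTop (nhds (fmax τ)) := by
    have h := tendsto_integral_of_dominated_convergence _
      (fun N => (hFmeas N).aestronglyMeasurable) hg_int hbound' hconv
    simpa [integral_const, measure_univ] using h
  -- assemble
  have hint_eq : ∀ N : ℕ,
      (∫ ω, γ * (fmax (fun a => avgKSmallest 1 (fun j : Fin (N + 1) => Q j a ω)) - fmax Qpi) ∂μ)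
      = γ * ((∫ ω, F N ω ∂μ) - fmax Qpi) := by
    intro N
    have h1 : (fun ω => γ *
        (fmax (fun a => avgKSmallest 1 (fun j : Fin (N + 1) => Q j a ω)) - fmax Qpi))
        = fun ω => γ * (F N ω - fmax Qpi) := by
      funext ω
      rw [hrw]
    rw [h1, integral_const_mul γ _, integral_sub (hFint N) (integrable_const _), integral_const]
    simp [measure_univ]
  have main : Tendsto
      (fun N : ℕ =>
        ∫ ω, γ * (fmax (fun a => avgKSmallest 1 (fun j : Fin (N + 1) => Q j a ω)) - fmax Qpi) ∂μ)
      atTop (nhds (γ * (fmax τ - fmax Qpi))) := by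
    simp only [hint_eq]
    exact (key.sub_const _).const_mul γ
  refine ⟨main, fun hlt => ?_⟩
  have h1 : fmax τ < fmax Qpi := by
    obtain ⟨a, -, ha⟩ := Finset.exists_mem_eq_sup' Finset.univ_nonempty τ
    calc fmax τ = τ a := ha
      _ < fmax Qpi := hlt a
  have h0 : γ * (fmax τ - fmax Qpi) < 0 := mul_neg_of_pos_of_neg hγ (sub_neg.2 h1)
  exact main.eventually (eventually_lt_nhds h0)
end
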